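/- Let D be an interval with 0 = min D, ψ a probability density on D positive a.e., 1 ≤ p ≤ ∞ with conjugate p′. The integral ∫_D |g(t)| 1_{[0,x)}(t) dt is finite for every g ∈ L_{p,ψ}(D) and every x ∈ D if and only if either p = ∞, or p < ∞ and ψ^{−1/p} ∈ L^loc_{p′}(D). -/

import Mathlib

open MeasureTheory
open scoped ENNReal

private lemma natCast_le_rpow {q : ℝ} (hq1 : 1 ≤ q) (n : ℕ) :
    (n : ℝ≥0∞) ≤ (n : ℝ≥0∞) ^ q := by
  rcases Nat.eq_zero_or_pos n with rfl | hn
  · simp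
  · calc (n : ℝ≥0∞) = (n : ℝ≥0∞) ^ (1 : ℝ) := (ENNReal.rpow_one _).symm
      _ ≤ (n : ℝ≥0∞) ^ q :=
        ENNReal.rpow_le_rpow_of_exponent_le (by exact_mod_cast Nat.one_le_cast.mpr hn) hq1

private lemma iSup_min_pow_eq {q : ℝ} (hq0 : 0 < q) (hq1 : 1 ≤ q) (x : ℝ≥0∞) :
    (⨆ n : ℕ, min x n ^ q) = x ^ q := by
  rcases eq_or_ne x ⊤ with ht | ht
  · apply le_antisymm (iSup_le fun n => ENNReal.rpow_le_rpow (min_le_left _ _) hq0.le)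
    rw [ht, ENNReal.top_rpow_of_pos hq0]
    have h1 : (⊤ : ℝ≥0∞) = ⨆ n : ℕ, (n : ℝ≥0∞) := ENNReal.iSup_natCast.symm
    calc (⊤ : ℝ≥0∞) = ⨆ n : ℕ, (n : ℝ≥0∞) := h1
      _ ≤ ⨆ n : ℕ, min (⊤:ℝ≥0∞) n ^ q := by
          refine iSup_mono fun n => ?_
          rw [min_eq_right (le_top : (n:ℝ≥0∞) ≤ ⊤)]
          exact natCast_le_rpow hq1 n
  · obtain ⟨n, hn⟩ := ENNReal.exists_nat_gt ht
    apply le_antisymm (iSup_le fun n => ENNReal.rpow_le_rpow (min_le_left _ _) hq0.le)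
    calc x ^ q = min x n ^ q := by rw [min_eq_left hn.le]
      _ ≤ ⨆ n : ℕ, min x n ^ q := le_iSup (fun n : ℕ => min x n ^ q) n

private lemma sup_pow_le_tsum_pow {p : ℝ} (hp0 : 0 < p) (c : ℕ → ℝ≥0∞) :
    (⨆ k, c k) ^ p ≤ ∑' k, c k ^ p := by
  set S := ∑' k, c k ^ p with hS
  have h1 : ∀ k, c k ≤ S ^ (1 / p) := by
    intro k
    have h2 : c k ^ p ≤ S := ENNReal.le_tsum k
    have h3 : (c k ^ p) ^ (1 / p) ≤ S ^ (1 / p) :=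
      ENNReal.rpow_le_rpow h2 (by positivity)
    rwa [← ENNReal.rpow_mul, mul_one_div, div_self hp0.ne', ENNReal.rpow_one] at h3
  calc (⨆ k, c k) ^ p ≤ (S ^ (1 / p)) ^ p := ENNReal.rpow_le_rpow (iSup_le h1) hp0.le
    _ = S := by rw [← ENNReal.rpow_mul, one_div, inv_mul_cancel₀ hp0.ne', ENNReal.rpow_one]

private lemma lintegral_eq_top_of_forall_pow_le {α : Type*} [MeasurableSpace α]
    {μ : Measure α} {G : α → ℝ≥0∞}
    (h : ∀ k : ℕ, (2 : ℝ≥0∞) ^ k ≤ ∫⁻ t, G t ∂μ) : ∫⁻ t, G t ∂μ = ⊤ := by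
  by_contra hne
  obtain ⟨n, hn⟩ := ENNReal.exists_nat_gt hne
  have h2 : (n : ℝ≥0∞) < 2 ^ n := by exact_mod_cast Nat.lt_two_pow_self (n := n)
  exact absurd ((h n).trans hn.le) (not_le.mpr h2)

private lemma rev_holder {α : Type*} [MeasurableSpace α] (μ : Measure α) [IsFiniteMeasure μ]
    {p q : ℝ} (hpq : p.HolderConjugate q) (h : α → ℝ≥0∞) (hm : Measurable h)
    (H : ∀ f : α → ℝ≥0∞, Measurable f → ∫⁻ t, f t ^ p ∂μ < ⊤ →
      ∫⁻ t, f t * h t ∂μ < ⊤) :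
    ∫⁻ t, h t ^ q ∂μ < ⊤ := by
  have hp0 : 0 < p := hpq.pos
  have hq0 : 0 < q := hpq.symm.pos
  have hq1 : 1 < q := hpq.symm.lt
  by_contra hcon
  have htop : ∫⁻ t, h t ^ q ∂μ = ⊤ := by simpa [lt_top_iff_ne_top] using hcon
  set a : ℕ → ℝ≥0∞ := fun n => ∫⁻ t, min (h t) n ^ q ∂μ with ha
  have hmeas_min : ∀ n : ℕ, Measurable fun t => min (h t) (n : ℝ≥0∞) ^ q :=
    fun n => (hm.min measurable_const).pow_const q
  have afin : ∀ n, a n ≠ ⊤ := by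
    intro n
    have hle : a n ≤ (n : ℝ≥0∞) ^ q * μ Set.univ := by
      rw [← lintegral_const]
      exact lintegral_mono fun t => ENNReal.rpow_le_rpow (min_le_right _ _) hq0.le
    exact (hle.trans_lt (ENNReal.mul_lt_top
      (ENNReal.rpow_lt_top_of_nonneg hq0.le (ENNReal.natCast_ne_top n))
      (measure_lt_top μ _))).ne
  have hmono : Monotone fun (n : ℕ) (t : α) => min (h t) (n : ℝ≥0∞) ^ q :=
    fun i j hij t =>
      ENNReal.rpow_le_rpow (min_le_min le_rfl (by exact_mod_cast hij)) hq0.le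
  have hsup : ⨆ n, a n = ⊤ := by
    calc (⨆ n, a n) = ∫⁻ t, ⨆ n : ℕ, min (h t) n ^ q ∂μ :=
          (lintegral_iSup hmeas_min hmono).symm
      _ = ∫⁻ t, h t ^ q ∂μ := lintegral_congr fun t => iSup_min_pow_eq hq0 hq1.le (h t)
      _ = ⊤ := htop
  have hchoice : ∀ k : ℕ, ∃ n : ℕ, (4 : ℝ≥0∞) ^ ((k : ℝ) * q) < a n := by
    intro k
    have hc : (4 : ℝ≥0∞) ^ ((k : ℝ) * q) < ⊤ :=
      ENNReal.rpow_lt_top_of_nonneg (by positivity) (by norm_num)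
    rw [← hsup] at hc
    exact lt_iSup_iff.mp hc
  choose n hn using hchoice
  set b : ℕ → ℝ≥0∞ := fun k => a (n k) with hb
  have hb0 : ∀ k, b k ≠ 0 := by
    intro k
    have h4 : (0 : ℝ≥0∞) < (4 : ℝ≥0∞) ^ ((k : ℝ) * q) :=
      ENNReal.rpow_pos (by norm_num) (by norm_num)
    exact (h4.trans (hn k)).ne'
  have hbt : ∀ k, b k ≠ ⊤ := fun k => afin (n k)
  have hbp0 : ∀ k, b k ^ (1 / p) ≠ 0 := by
    intro k
    simp only [ne_eq, ENNReal.rpow_eq_zero_iff, not_or]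
    exact ⟨fun hh => hb0 k hh.1, fun hh => hbt k hh.1⟩
  have hbpt : ∀ k, b k ^ (1 / p) ≠ ⊤ :=
    fun k => (ENNReal.rpow_lt_top_of_nonneg (by positivity) (hbt k)).ne
  set f : ℕ → α → ℝ≥0∞ :=
    fun k t => min (h t) (n k) ^ (q - 1) * (b k ^ (1 / p))⁻¹ with hf
  have hfmeas : ∀ k, Measurable (f k) :=
    fun k => ((hm.min measurable_const).pow_const _).mul_const _
  have hq1p : (q - 1) * p = q := hpq.symm.sub_one_mul_conj
  have hfp : ∀ k, ∫⁻ t, f k t ^ p ∂μ = 1 := by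
    intro k
    have hpt : ∀ t, f k t ^ p = min (h t) (n k) ^ q * (b k)⁻¹ := by
      intro t
      rw [hf]
      rw [ENNReal.mul_rpow_of_nonneg _ _ hp0.le, ← ENNReal.rpow_mul, hq1p,
        ENNReal.inv_rpow, ← ENNReal.rpow_mul, one_div, inv_mul_cancel₀ hp0.ne',
        ENNReal.rpow_one]
    simp only [hpt]
    rw [lintegral_mul_const _ (hmeas_min (n k))]
    exact ENNReal.mul_inv_cancel (hb0 k) (hbt k)
  have hflow : ∀ k, (4 : ℝ≥0∞) ^ (k : ℕ) ≤ ∫⁻ t, f k t * h t ∂μ := by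
    intro k
    have hpt : ∀ t, min (h t) (n k) ^ q * (b k ^ (1 / p))⁻¹ ≤ f k t * h t := by
      intro t
      rw [hf]
      have h1 : min (h t) (n k) ^ (q - 1) * min (h t) (n k) = min (h t) (n k) ^ q := by
        nth_rewrite 2 [← ENNReal.rpow_one (min (h t) (n k))]
        rw [← ENNReal.rpow_add_of_nonneg _ _ (by linarith : (0:ℝ) ≤ q - 1) zero_le_one]
        norm_num
      rw [← h1, mul_right_comm]
      exact mul_le_mul_right (min_le_left _ _) _
    calc (4 : ℝ≥0∞) ^ (k : ℕ) = ((4 : ℝ≥0∞) ^ ((k : ℝ) * q)) ^ (1 / q) := by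
          rw [← ENNReal.rpow_mul, mul_one_div, mul_div_cancel_right₀ _ hq0.ne',
            ENNReal.rpow_natCast]
      _ ≤ b k ^ (1 / q) := ENNReal.rpow_le_rpow (hn k).le (by positivity)
      _ = b k * (b k ^ (1 / p))⁻¹ := by
          have hbb : b k ^ (1 / q) * b k ^ (1 / p) = b k := by
            rw [← ENNReal.rpow_add_of_nonneg _ _ (by positivity) (by positivity),
              one_div, one_div, hpq.symm.inv_add_inv_eq_one, ENNReal.rpow_one]
          have h2 : b k * (b k ^ (1 / p))⁻¹ = b k ^ (1 / q) := by
            nth_rewrite 1 [← hbb]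
            rw [mul_assoc, ENNReal.mul_inv_cancel (hbp0 k) (hbpt k), mul_one]
          exact h2.symm
      _ = ∫⁻ t, min (h t) (n k) ^ q * (b k ^ (1 / p))⁻¹ ∂μ := by
          rw [lintegral_mul_const _ (hmeas_min (n k))]
      _ ≤ ∫⁻ t, f k t * h t ∂μ := lintegral_mono hpt
  set F : α → ℝ≥0∞ := fun t => ⨆ k : ℕ, (2 : ℝ≥0∞)⁻¹ ^ k * f k t with hF
  have hFmeas : Measurable F := Measurable.iSup fun k => (hfmeas k).const_mul _
  have hFp : ∫⁻ t, F t ^ p ∂μ < ⊤ := by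
    have hpt : ∀ t, F t ^ p ≤ ∑' k, ((2 : ℝ≥0∞)⁻¹ ^ k * f k t) ^ p :=
      fun t => sup_pow_le_tsum_pow hp0 _
    calc ∫⁻ t, F t ^ p ∂μ ≤ ∫⁻ t, ∑' k, ((2 : ℝ≥0∞)⁻¹ ^ k * f k t) ^ p ∂μ :=
          lintegral_mono hpt
      _ = ∑' k, ∫⁻ t, ((2 : ℝ≥0∞)⁻¹ ^ k * f k t) ^ p ∂μ :=
          lintegral_tsum fun k =>
            (((hfmeas k).const_mul _).pow_const _).aemeasurable
      _ = ∑' k, ((2 : ℝ≥0∞)⁻¹ ^ p) ^ k := by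
          refine tsum_congr fun k => ?_
          have heq : ∀ t, ((2 : ℝ≥0∞)⁻¹ ^ k * f k t) ^ p
              = ((2 : ℝ≥0∞)⁻¹ ^ p) ^ k * f k t ^ p := by
            intro t
            rw [ENNReal.mul_rpow_of_nonneg _ _ hp0.le, ← ENNReal.rpow_natCast (2:ℝ≥0∞)⁻¹ k,
              ← ENNReal.rpow_mul, mul_comm (k:ℝ) p, ENNReal.rpow_mul,
              ENNReal.rpow_natCast]
          simp only [heq]
          rw [lintegral_const_mul _ ((hfmeas k).pow_const _), hfp k, mul_one]
      _ < ⊤ := by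
          rw [ENNReal.tsum_geometric]
          refine ENNReal.inv_lt_top.mpr ?_
          rw [pos_iff_ne_zero, ne_eq, tsub_eq_zero_iff_le, not_le]
          refine ENNReal.rpow_lt_one ?_ hp0
          exact ENNReal.inv_lt_one.mpr ENNReal.one_lt_two
  have hFh := H F hFmeas hFp
  have h24 : (2 : ℝ≥0∞)⁻¹ * 4 = 2 := by
    rw [show (4:ℝ≥0∞) = 2 * 2 by norm_num, ← mul_assoc,
      ENNReal.inv_mul_cancel two_ne_zero ENNReal.ofNat_ne_top, one_mul]
  have hFtop : ∫⁻ t, F t * h t ∂μ = ⊤ := by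
    apply lintegral_eq_top_of_forall_pow_le
    intro k
    calc (2 : ℝ≥0∞) ^ k = (2:ℝ≥0∞)⁻¹ ^ k * 4 ^ k := by rw [← mul_pow, h24]
      _ ≤ (2:ℝ≥0∞)⁻¹ ^ k * ∫⁻ t, f k t * h t ∂μ := mul_le_mul_right (hflow k) _
      _ = ∫⁻ t, (2:ℝ≥0∞)⁻¹ ^ k * (f k t * h t) ∂μ :=
          (lintegral_const_mul _ ((hfmeas k).mul hm)).symm
      _ ≤ ∫⁻ t, F t * h t ∂μ := by
          refine lintegral_mono fun t => ?_
          rw [← mul_assoc]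
          exact mul_le_mul_left (le_iSup (fun k => (2:ℝ≥0∞)⁻¹ ^ k * f k t) k) _
  exact absurd hFtop hFh.ne

private lemma rev_holder_top {α : Type*} [MeasurableSpace α] (μ : Measure α)
    [IsFiniteMeasure μ] (h : α → ℝ≥0∞) (hm : Measurable h)
    (H : ∀ f : α → ℝ≥0∞, Measurable f → ∫⁻ t, f t ∂μ < ⊤ →
      ∫⁻ t, f t * h t ∂μ < ⊤) :
    essSup h μ < ⊤ := by
  by_contra hcon
  have htop : essSup h μ = ⊤ := by simpa [lt_top_iff_ne_top] using hcon
  set A : ℕ → Set α := fun k => {t | (4 : ℝ≥0∞) ^ k < h t} with hA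
  have hAmeas : ∀ k, MeasurableSet (A k) := fun k => hm measurableSet_Ioi
  have hm0 : ∀ k, μ (A k) ≠ 0 := by
    intro k hzero
    have hae : ∀ᵐ t ∂μ, h t ≤ (4 : ℝ≥0∞) ^ k := by
      rw [ae_iff]
      simpa [hA, not_le] using hzero
    have hle : essSup h μ ≤ (4 : ℝ≥0∞) ^ k := essSup_le_of_ae_le _ hae
    rw [htop] at hle
    exact absurd (hle.trans_lt (by simp [lt_top_iff_ne_top] :
      ((4 : ℝ≥0∞) ^ k) < ⊤)) (lt_irrefl _)
  have hmt : ∀ k, μ (A k) ≠ ⊤ := fun k => measure_ne_top μ _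
  set f : ℕ → α → ℝ≥0∞ :=
    fun k => (A k).indicator fun _ => (2 : ℝ≥0∞)⁻¹ ^ k * (μ (A k))⁻¹ with hf
  have hfmeas : ∀ k, Measurable (f k) :=
    fun k => measurable_const.indicator (hAmeas k)
  have hfint : ∀ k, ∫⁻ t, f k t ∂μ = (2 : ℝ≥0∞)⁻¹ ^ k := by
    intro k
    rw [hf, lintegral_indicator_const (hAmeas k), mul_assoc,
      ENNReal.inv_mul_cancel (hm0 k) (hmt k), mul_one]
  have hflow : ∀ k, (2 : ℝ≥0∞) ^ k ≤ ∫⁻ t, f k t * h t ∂μ := by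
    intro k
    have hpt : ∀ t, (A k).indicator
        (fun _ => (2 : ℝ≥0∞)⁻¹ ^ k * (μ (A k))⁻¹ * 4 ^ k) t ≤ f k t * h t := by
      intro t
      simp only [hf]
      by_cases ht : t ∈ A k
      · rw [Set.indicator_of_mem ht, Set.indicator_of_mem ht]
        exact mul_le_mul_right (le_of_lt (show (4:ℝ≥0∞) ^ k < h t from ht)) _
      · rw [Set.indicator_of_notMem ht, Set.indicator_of_notMem ht, zero_mul]
    have h24 : (2 : ℝ≥0∞)⁻¹ * 4 = 2 := by
      rw [show (4:ℝ≥0∞) = 2 * 2 by norm_num, ← mul_assoc,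
        ENNReal.inv_mul_cancel two_ne_zero ENNReal.ofNat_ne_top, one_mul]
    calc (2 : ℝ≥0∞) ^ k = (2 : ℝ≥0∞)⁻¹ ^ k * (μ (A k))⁻¹ * 4 ^ k * μ (A k) := by
          have hr : (2:ℝ≥0∞)⁻¹ ^ k * (μ (A k))⁻¹ * 4 ^ k * μ (A k)
              = ((2:ℝ≥0∞)⁻¹ ^ k * 4 ^ k) * ((μ (A k))⁻¹ * μ (A k)) := by ring
          rw [hr, ENNReal.inv_mul_cancel (hm0 k) (hmt k), mul_one, ← mul_pow, h24]
      _ = ∫⁻ t, (A k).indicator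
            (fun _ => (2 : ℝ≥0∞)⁻¹ ^ k * (μ (A k))⁻¹ * 4 ^ k) t ∂μ :=
          (lintegral_indicator_const (hAmeas k) _).symm
      _ ≤ ∫⁻ t, f k t * h t ∂μ := lintegral_mono hpt
  set F : α → ℝ≥0∞ := fun t => ⨆ k : ℕ, f k t with hF
  have hFmeas : Measurable F := Measurable.iSup hfmeas
  have hFint : ∫⁻ t, F t ∂μ < ⊤ := by
    calc ∫⁻ t, F t ∂μ ≤ ∫⁻ t, ∑' k, f k t ∂μ :=
          lintegral_mono fun t => iSup_le fun k => ENNReal.le_tsum k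
      _ = ∑' k, ∫⁻ t, f k t ∂μ := lintegral_tsum fun k => (hfmeas k).aemeasurable
      _ = ∑' k, (2 : ℝ≥0∞)⁻¹ ^ k := tsum_congr hfint
      _ < ⊤ := by
          rw [ENNReal.tsum_geometric]
          refine ENNReal.inv_lt_top.mpr ?_
          rw [pos_iff_ne_zero, ne_eq, tsub_eq_zero_iff_le, not_le]
          exact ENNReal.inv_lt_one.mpr ENNReal.one_lt_two
  have hFh := H F hFmeas hFint
  have hFtop : ∫⁻ t, F t * h t ∂μ = ⊤ := by
    apply lintegral_eq_top_of_forall_pow_le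
    intro k
    calc (2 : ℝ≥0∞) ^ k ≤ ∫⁻ t, f k t * h t ∂μ := hflow k
      _ ≤ ∫⁻ t, F t * h t ∂μ :=
          lintegral_mono fun t => mul_le_mul_left (le_iSup (fun k => f k t) k) _
  exact absurd hFtop hFh.ne

/-- `∫_D |g(t)| 1_{[0,x)}(t) dt < ∞` for every `g ∈ L_{p,ψ}(D)` and every `x ∈ D` iff
`p = ∞`, or `p < ∞` and `ψ^{−1/p} ∈ L^loc_{p'}(D)`. -/
theorem stmt7 (D : Set ℝ)
    (hD : (∃ T : ℝ, 0 < T ∧ (D = Set.Ico 0 T ∨ D = Set.Icc 0 T)) ∨ D = Set.Ici 0)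
    (ψ : ℝ → ℝ) (hψm : Measurable ψ) (hψ0 : ∀ t ∈ D, 0 ≤ ψ t)
    (hψpos : ∀ᵐ t ∂(volume.restrict D), 0 < ψ t)
    (hψ1 : ∫ t in D, ψ t = 1)
    (p p' : ℝ≥0∞) (hp : 1 ≤ p) (hpq : 1 / p + 1 / p' = 1) :
    (∀ g : ℝ → ℝ,
        MemLp g p ((volume.restrict D).withDensity fun t => ENNReal.ofReal (ψ t)) →
        ∀ x ∈ D, IntegrableOn (fun t => |g t|) (D ∩ Set.Ico 0 x) volume)
    ↔ (p = ⊤ ∨ (p ≠ ⊤ ∧ ∀ x ∈ D,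
        MemLp (fun t => (ψ t) ^ (-(1 / p.toReal))) p'
          (volume.restrict (D ∩ Set.Ico 0 x)))) := by
  have hDmeas : MeasurableSet D := by
    rcases hD with ⟨T, hT, rfl | rfl⟩ | rfl
    exacts [measurableSet_Ico, measurableSet_Icc, measurableSet_Ici]
  set F : ℝ → ℝ≥0∞ := fun t => ENNReal.ofReal (ψ t) with hF
  have hFmeas : Measurable F := hψm.ennreal_ofReal
  set ν := (volume.restrict D).withDensity F with hν
  set pR := p.toReal with hpR
  have hp0 : p ≠ 0 := (lt_of_lt_of_le zero_lt_one hp).ne'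
  set w : ℝ → ℝ≥0∞ := fun t => ENNReal.ofReal (ψ t ^ (-(1 / pR))) with hw
  have hwmeas : Measurable w := (hψm.pow_const _).ennreal_ofReal
  constructor
  · intro hLHS
    by_cases hptop : p = ⊤
    · exact Or.inl hptop
    refine Or.inr ⟨hptop, fun x hx => ?_⟩
    set E := D ∩ Set.Ico 0 x with hE
    have hEmeas : MeasurableSet E := hDmeas.inter measurableSet_Ico
    have hED : E ⊆ D := Set.inter_subset_left
    have hrestrict : volume.restrict E = (volume.restrict D).restrict (Set.Ico 0 x) := by
      rw [Measure.restrict_restrict measurableSet_Ico, Set.inter_comm]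
    haveI hEfin : IsFiniteMeasure (volume.restrict E) := by
      constructor
      rw [Measure.restrict_apply_univ]
      refine lt_of_le_of_lt (measure_mono (Set.inter_subset_right : E ⊆ _)) ?_
      rw [Real.volume_Ico]
      exact ENNReal.ofReal_lt_top
    have hψposE : ∀ᵐ t ∂(volume.restrict E), 0 < ψ t := by
      rw [hrestrict]; exact ae_restrict_of_ae hψpos
    have hmemE : ∀ᵐ t ∂(volume.restrict E), t ∈ E := ae_restrict_mem hEmeas
    have hwF : ∀ᵐ t ∂(volume.restrict E), F t ^ (1 / pR) * w t = 1 := by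
      filter_upwards [hψposE] with t ht
      rw [hF, hw, ENNReal.ofReal_rpow_of_pos ht,
        ← ENNReal.ofReal_mul (Real.rpow_nonneg ht.le _),
        ← Real.rpow_add ht, add_neg_cancel, Real.rpow_zero, ENNReal.ofReal_one]
    have hwcongr : (fun t => (‖ψ t ^ (-(1 / pR))‖₊ : ℝ≥0∞)) =ᵐ[volume.restrict E] w := by
      filter_upwards [hmemE] with t ht
      rw [← enorm_eq_nnnorm, Real.enorm_eq_ofReal (Real.rpow_nonneg (hψ0 t (hED ht)) _)]
    have hpR0 : 0 < pR := ENNReal.toReal_pos hp0 hptop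
    have hwpow : ∀ᵐ t ∂(volume.restrict E), w t ^ pR * F t = 1 := by
      filter_upwards [hψposE] with t ht
      rw [hw, hF, ENNReal.ofReal_rpow_of_pos (Real.rpow_pos_of_pos ht _),
        ← Real.rpow_mul ht.le, neg_mul, one_div, inv_mul_cancel₀ hpR0.ne',
        ← ENNReal.ofReal_mul (Real.rpow_nonneg ht.le _), Real.rpow_neg_one,
        inv_mul_cancel₀ ht.ne', ENNReal.ofReal_one]
    have hind : ∀ k : ℝ → ℝ≥0∞, ∫⁻ t, E.indicator k t ∂(volume.restrict D)
        = ∫⁻ t in E, k t ∂volume := by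
      intro k
      rw [lintegral_indicator hEmeas, Measure.restrict_restrict hEmeas,
        Set.inter_eq_left.mpr hED]
    have hbridge : ∀ f : ℝ → ℝ≥0∞, Measurable f →
        ∫⁻ t in E, f t ^ pR ∂volume < ⊤ → ∫⁻ t in E, f t * w t ∂volume < ⊤ := by
      intro f hf hfp
      set X : ℝ → ℝ≥0∞ := E.indicator (fun s => f s * w s) with hX
      have hXmeas : Measurable X := (hf.mul hwmeas).indicator hEmeas
      set g : ℝ → ℝ := fun t => (X t).toReal with hg
      have hgmeas : Measurable g := hXmeas.ennreal_toReal
      have hgle : ∀ t, (‖g t‖₊ : ℝ≥0∞) ≤ X t := by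
        intro t
        rw [hg, ← enorm_eq_nnnorm, Real.enorm_eq_ofReal ENNReal.toReal_nonneg]
        exact ENNReal.ofReal_toReal_le
      have hXint : ∫⁻ t, X t ^ pR ∂ν = ∫⁻ t in E, f t ^ pR ∂volume := by
        rw [hν, lintegral_withDensity_eq_lintegral_mul _ hFmeas (hXmeas.pow_const pR)]
        have hptw : ∀ t, (F * fun t => X t ^ pR) t
            = E.indicator (fun s => F s * (f s * w s) ^ pR) t := by
          intro t
          simp only [Pi.mul_apply, hX]
          by_cases ht : t ∈ E
          · rw [Set.indicator_of_mem ht, Set.indicator_of_mem ht]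
          · rw [Set.indicator_of_notMem ht, Set.indicator_of_notMem ht,
              ENNReal.zero_rpow_of_pos hpR0, mul_zero]
        rw [lintegral_congr hptw, hind]
        refine lintegral_congr_ae ?_
        filter_upwards [hwpow] with t ht
        rw [ENNReal.mul_rpow_of_nonneg _ _ hpR0.le]
        calc F t * (f t ^ pR * w t ^ pR) = f t ^ pR * (w t ^ pR * F t) := by ring
          _ = f t ^ pR := by rw [ht, mul_one]
      have hmem : MemLp g p ν := by
        refine ⟨hgmeas.aestronglyMeasurable, ?_⟩
        rw [eLpNorm_eq_lintegral_rpow_enorm_toReal hp0 hptop]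
        refine ENNReal.rpow_lt_top_of_nonneg (by positivity) ?_
        refine ne_of_lt (lt_of_le_of_lt ?_ (hXint ▸ hfp))
        exact lintegral_mono fun t => ENNReal.rpow_le_rpow (hgle t) hpR0.le
      have hInt := hLHS g hmem x hx
      have hffin : ∀ᵐ t ∂(volume.restrict E), f t ≠ ⊤ := by
        filter_upwards [ae_lt_top (hf.pow_const pR) hfp.ne] with t ht
        intro hcontra
        rw [hcontra, ENNReal.top_rpow_of_pos hpR0] at ht
        exact absurd ht (lt_irrefl _)
      have hgw : ∀ᵐ t ∂(volume.restrict E), (‖g t‖₊ : ℝ≥0∞) = f t * w t := by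
        filter_upwards [hmemE, hffin] with t ht hft
        rw [hg, ← enorm_eq_nnnorm, Real.enorm_eq_ofReal ENNReal.toReal_nonneg, hX, Set.indicator_of_mem ht,
          ENNReal.ofReal_toReal]
        exact ENNReal.mul_ne_top hft (by simp [hw])
      have h2 := hInt.2
      rw [hasFiniteIntegral_def] at h2
      simp only [Real.enorm_abs] at h2
      calc ∫⁻ t in E, f t * w t ∂volume
          = ∫⁻ t in E, (‖g t‖₊ : ℝ≥0∞) ∂volume := (lintegral_congr_ae hgw).symm
        _ < ⊤ := h2
    rcases eq_or_lt_of_le hp with hp1 | hlt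
    · -- p = 1, p' = ⊤
      have hp'top : p' = ⊤ := by
        rw [← hp1] at hpq
        simp only [one_div, inv_one] at hpq
        have h10 : (1:ℝ≥0∞) + p'⁻¹ = 1 + 0 := by rw [add_zero]; exact hpq
        exact ENNReal.inv_eq_zero.mp ((ENNReal.add_right_inj ENNReal.one_ne_top).mp h10)
      subst hp'top
      have hpR1 : pR = 1 := by rw [hpR, ← hp1, ENNReal.toReal_one]
      have hess : essSup w (volume.restrict E) < ⊤ := by
        apply rev_holder_top (volume.restrict E) w hwmeas
        intro f hf hfint
        apply hbridge f hf
        simpa [hpR1, ENNReal.rpow_one] using hfint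
      refine ⟨(hψm.pow_const _).aestronglyMeasurable, ?_⟩
      rw [eLpNorm_exponent_top]
      exact lt_of_eq_of_lt (essSup_congr_ae hwcongr) hess
    · -- 1 < p
      have h1p' : 1 / p' = 1 - 1 / p := by
        have hcc := ENNReal.add_sub_cancel_left (a := 1/p) (b := 1/p')
          (by rw [one_div]; exact ENNReal.inv_ne_top.mpr hp0)
        rw [hpq] at hcc
        exact hcc.symm
      have hp'ne0 : p' ≠ 0 := by
        intro hc
        rw [hc, one_div, ENNReal.inv_zero] at h1p'
        have hle : (1:ℝ≥0∞) - 1/p ≤ 1 := tsub_le_self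
        rw [← h1p'] at hle
        exact absurd hle (by simp)
      have hinvp_lt1 : 1/p < 1 := by rw [one_div]; exact ENNReal.inv_lt_one.mpr hlt
      have hp'ne_top : p' ≠ ⊤ := by
        intro hc
        rw [hc, one_div, ENNReal.inv_top, eq_comm, tsub_eq_zero_iff_le] at h1p'
        exact absurd h1p' (not_le.mpr hinvp_lt1)
      have hpR1 : 1 < pR := by
        rw [hpR, ← ENNReal.toReal_one]
        exact (ENNReal.toReal_lt_toReal ENNReal.one_ne_top hptop).mpr hlt
      have hconjR : pR.HolderConjugate p'.toReal := by
        refine Real.holderConjugate_iff.mpr ⟨hpR1, ?_⟩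
        have hcast := congrArg ENNReal.toReal hpq
        rwa [ENNReal.toReal_add (by rw [one_div]; exact ENNReal.inv_ne_top.mpr hp0)
            (by rw [one_div]; exact ENNReal.inv_ne_top.mpr hp'ne0),
          ENNReal.toReal_one, one_div, one_div, ENNReal.toReal_inv, ENNReal.toReal_inv]
          at hcast
      have hint : ∫⁻ t, w t ^ p'.toReal ∂(volume.restrict E) < ⊤ :=
        rev_holder (volume.restrict E) hconjR w hwmeas (fun f hf hfp => hbridge f hf hfp)
      refine ⟨(hψm.pow_const _).aestronglyMeasurable, ?_⟩
      rw [eLpNorm_eq_lintegral_rpow_enorm_toReal hp'ne0 hp'ne_top]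
      refine ENNReal.rpow_lt_top_of_nonneg (by positivity) ?_
      refine ne_of_lt (lt_of_eq_of_lt ?_ hint)
      refine lintegral_congr_ae ?_
      filter_upwards [hwcongr] with t ht
      rw [enorm_eq_nnnorm, ht]
  · intro hRHS g hg x hx
    set E := D ∩ Set.Ico 0 x with hE
    have hEmeas : MeasurableSet E := hDmeas.inter measurableSet_Ico
    have hED : E ⊆ D := Set.inter_subset_left
    have hrestrict : volume.restrict E = (volume.restrict D).restrict (Set.Ico 0 x) := by
      rw [Measure.restrict_restrict measurableSet_Ico, Set.inter_comm]
    haveI hEfin : IsFiniteMeasure (volume.restrict E) := by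
      constructor
      rw [Measure.restrict_apply_univ]
      refine lt_of_le_of_lt (measure_mono (Set.inter_subset_right : E ⊆ _)) ?_
      rw [Real.volume_Ico]
      exact ENNReal.ofReal_lt_top
    have hψposE : ∀ᵐ t ∂(volume.restrict E), 0 < ψ t := by
      rw [hrestrict]; exact ae_restrict_of_ae hψpos
    have hmemE : ∀ᵐ t ∂(volume.restrict E), t ∈ E := ae_restrict_mem hEmeas
    have hwF : ∀ᵐ t ∂(volume.restrict E), F t ^ (1 / pR) * w t = 1 := by
      filter_upwards [hψposE] with t ht
      rw [hF, hw, ENNReal.ofReal_rpow_of_pos ht,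
        ← ENNReal.ofReal_mul (Real.rpow_nonneg ht.le _),
        ← Real.rpow_add ht, add_neg_cancel, Real.rpow_zero, ENNReal.ofReal_one]
    have hwcongr : (fun t => (‖ψ t ^ (-(1 / pR))‖₊ : ℝ≥0∞)) =ᵐ[volume.restrict E] w := by
      filter_upwards [hmemE] with t ht
      rw [← enorm_eq_nnnorm, Real.enorm_eq_ofReal (Real.rpow_nonneg (hψ0 t (hED ht)) _)]
    have hvolE : volume E < ⊤ := by
      refine lt_of_le_of_lt (measure_mono (Set.inter_subset_right : E ⊆ _)) ?_
      rw [Real.volume_Ico]; exact ENNReal.ofReal_lt_top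
    have hF_ne0 : ∀ᵐ t ∂(volume.restrict D), F t ≠ 0 := by
      filter_upwards [hψpos] with t ht
      simp [hF, ENNReal.ofReal_eq_zero, not_le, ht]
    have hac : volume.restrict D ≪ ν :=
      withDensity_absolutelyContinuous' hFmeas.aemeasurable hF_ne0
    have hgD : AEStronglyMeasurable g (volume.restrict D) := hg.1.mono_ac hac
    have hgE : AEStronglyMeasurable g (volume.restrict E) := by
      rw [hrestrict]; exact hgD.restrict
    have habs : (fun t => |g t|) = fun t => ‖g t‖ :=
      funext fun t => (Real.norm_eq_abs _).symm
    refine ⟨by rw [habs]; exact hgE.norm, ?_⟩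
    rw [hasFiniteIntegral_def]
    simp only [Real.enorm_abs, enorm_eq_nnnorm, Real.nnnorm_abs]
    rcases hRHS with hptop | ⟨hptop, hcond⟩
    · -- p = ⊤
      have h2 := hg.2
      rw [hptop, eLpNorm_exponent_top] at h2
      have hboundν : ∀ᵐ t ∂ν, (‖g t‖₊ : ℝ≥0∞) ≤ eLpNormEssSup g ν := ae_le_eLpNormEssSup
      have hboundD : ∀ᵐ t ∂(volume.restrict D), (‖g t‖₊:ℝ≥0∞) ≤ eLpNormEssSup g ν :=
        hboundν.filter_mono hac.ae_le
      have hboundE : ∀ᵐ t ∂(volume.restrict E), (‖g t‖₊:ℝ≥0∞) ≤ eLpNormEssSup g ν := by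
        rw [hrestrict]; exact ae_restrict_of_ae hboundD
      calc ∫⁻ t in E, (‖g t‖₊:ℝ≥0∞) ∂volume
          ≤ ∫⁻ _ in E, eLpNormEssSup g ν ∂volume := lintegral_mono_ae hboundE
        _ = eLpNormEssSup g ν * volume E := setLIntegral_const E _
        _ < ⊤ := ENNReal.mul_lt_top h2 hvolE
    · have hcx := hcond x hx
      have hpR0 : 0 < pR := ENNReal.toReal_pos hp0 hptop
      have hgν : ∫⁻ t, (‖g t‖₊:ℝ≥0∞) ^ pR ∂ν < ⊤ := by
        have h2 := hg.2
        rw [eLpNorm_eq_lintegral_rpow_enorm_toReal hp0 hptop] at h2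
        exact (ENNReal.rpow_lt_top_iff_of_pos (by positivity)).mp h2
      set u : ℝ → ℝ≥0∞ := fun t => (‖g t‖₊:ℝ≥0∞) * F t ^ (1/pR) with hu
      have huE : ∫⁻ t in E, u t ^ pR ∂volume ≤ ∫⁻ t, (‖g t‖₊:ℝ≥0∞) ^ pR ∂ν := by
        have hpt : ∀ t, u t ^ pR = (‖g t‖₊:ℝ≥0∞) ^ pR * F t := by
          intro t
          rw [hu, ENNReal.mul_rpow_of_nonneg _ _ hpR0.le, ← ENNReal.rpow_mul, one_div,
            inv_mul_cancel₀ hpR0.ne', ENNReal.rpow_one]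
        simp only [hpt]
        calc ∫⁻ t in E, (‖g t‖₊:ℝ≥0∞) ^ pR * F t ∂volume
            ≤ ∫⁻ t in D, (‖g t‖₊:ℝ≥0∞) ^ pR * F t ∂volume :=
              lintegral_mono' (Measure.restrict_mono hED le_rfl) le_rfl
          _ = ∫⁻ t, (‖g t‖₊:ℝ≥0∞) ^ pR ∂ν := by
              simp only [← enorm_eq_nnnorm]
              rw [hν, lintegral_withDensity_eq_lintegral_mul₀' hFmeas.aemeasurable
                (hg.1.enorm.pow_const pR)]
              exact lintegral_congr fun t => by simp [mul_comm]
      have hdecomp : ∀ᵐ t ∂(volume.restrict E), (‖g t‖₊:ℝ≥0∞) = u t * w t := by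
        filter_upwards [hwF] with t ht
        rw [hu, mul_assoc, ht, mul_one]
      rw [lintegral_congr_ae hdecomp]
      rcases eq_or_lt_of_le hp with hp1 | hlt
      · -- p = 1, p' = ⊤
        have hp'top : p' = ⊤ := by
          rw [← hp1] at hpq
          simp only [one_div, inv_one] at hpq
          have h10 : (1:ℝ≥0∞) + p'⁻¹ = 1 + 0 := by rw [add_zero]; exact hpq
          exact ENNReal.inv_eq_zero.mp ((ENNReal.add_right_inj ENNReal.one_ne_top).mp h10)
        subst hp'top
        have hpR1 : pR = 1 := by rw [hpR, ← hp1, ENNReal.toReal_one]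
        have hess : essSup w (volume.restrict E) < ⊤ := by
          have h2 := hcx.2
          rw [eLpNorm_exponent_top] at h2
          exact lt_of_eq_of_lt (essSup_congr_ae hwcongr).symm h2
        have hbound : ∀ᵐ t ∂(volume.restrict E),
            u t * w t ≤ essSup w (volume.restrict E) * u t := by
          filter_upwards [ae_le_essSup (f := w) (μ := volume.restrict E)] with t ht
          rw [mul_comm (essSup w (volume.restrict E)) (u t)]
          exact mul_le_mul_right ht _
        calc ∫⁻ t in E, u t * w t ∂volume
            ≤ ∫⁻ t in E, essSup w (volume.restrict E) * u t ∂volume :=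
              lintegral_mono_ae hbound
          _ = essSup w (volume.restrict E) * ∫⁻ t in E, u t ∂volume :=
              lintegral_const_mul' _ _ hess.ne
          _ < ⊤ := by
              have huE' := huE
              have hgν' := hgν
              simp only [hpR1, ENNReal.rpow_one] at huE' hgν'
              exact ENNReal.mul_lt_top hess (lt_of_le_of_lt huE' hgν')
      · -- 1 < p
        have h1p' : 1 / p' = 1 - 1 / p := by
          have hcc := ENNReal.add_sub_cancel_left (a := 1/p) (b := 1/p')
            (by rw [one_div]; exact ENNReal.inv_ne_top.mpr hp0)
          rw [hpq] at hcc
          exact hcc.symm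
        have hp'ne0 : p' ≠ 0 := by
          intro hc
          rw [hc, one_div, ENNReal.inv_zero] at h1p'
          have hle : (1:ℝ≥0∞) - 1/p ≤ 1 := tsub_le_self
          rw [← h1p'] at hle
          exact absurd hle (by simp)
        have hinvp_lt1 : 1/p < 1 := by rw [one_div]; exact ENNReal.inv_lt_one.mpr hlt
        have hp'ne_top : p' ≠ ⊤ := by
          intro hc
          rw [hc, one_div, ENNReal.inv_top, eq_comm, tsub_eq_zero_iff_le] at h1p'
          exact absurd h1p' (not_le.mpr hinvp_lt1)
        have hpR1 : 1 < pR := by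
          rw [hpR, ← ENNReal.toReal_one]
          exact (ENNReal.toReal_lt_toReal ENNReal.one_ne_top hptop).mpr hlt
        have hconjR : pR.HolderConjugate p'.toReal := by
          refine Real.holderConjugate_iff.mpr ⟨hpR1, ?_⟩
          have hcast := congrArg ENNReal.toReal hpq
          rwa [ENNReal.toReal_add (by rw [one_div]; exact ENNReal.inv_ne_top.mpr hp0)
              (by rw [one_div]; exact ENNReal.inv_ne_top.mpr hp'ne0),
            ENNReal.toReal_one, one_div, one_div, ENNReal.toReal_inv, ENNReal.toReal_inv]
            at hcast
        have hp'R0 : 0 < p'.toReal := ENNReal.toReal_pos hp'ne0 hp'ne_top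
        have hw2 : ∫⁻ t in E, w t ^ p'.toReal ∂volume < ⊤ := by
          have h2 := hcx.2
          rw [eLpNorm_eq_lintegral_rpow_enorm_toReal hp'ne0 hp'ne_top] at h2
          have h3 := (ENNReal.rpow_lt_top_iff_of_pos (by positivity)).mp h2
          refine lt_of_eq_of_lt ?_ h3
          refine lintegral_congr_ae ?_
          filter_upwards [hwcongr] with t ht
          rw [enorm_eq_nnnorm, ht]
        have hholder := ENNReal.lintegral_mul_le_Lp_mul_Lq (volume.restrict E) hconjR
          (hgE.enorm.mul ((hFmeas.pow_const (1/pR)).aemeasurable)) hwmeas.aemeasurable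
        refine lt_of_le_of_lt (le_trans (le_of_eq ?_) hholder) ?_
        · exact lintegral_congr fun t => by simp [hu, Pi.mul_apply, enorm_eq_nnnorm]
        · refine ENNReal.mul_lt_top ?_ ?_
          · exact ENNReal.rpow_lt_top_of_nonneg (by positivity)
              (lt_of_le_of_lt huE hgν).ne
          · exact ENNReal.rpow_lt_top_of_nonneg (by positivity) hw2.ne
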